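/- A distribution μ on binom([n],k) is η-spectrally independent (λ_max(Ψ_μ) ≤ η) if and only if the Hessian of the function z ↦ log g_μ(z₁^{1/η}, …, z_n^{1/η}) evaluated at z = (1,…,1) is negative semidefinite, which in turn equals (1/η)² D Ψ_μ − (1/η) D, where D is the diagonal matrix with D_{ii} = P_μ[i ∈ S]. -/

import Mathlib

open Finset BigOperators
open scoped Matrix

noncomputable section

def kSets (n k : ℕ) : Finset (Finset (Fin n)) := Finset.univ.powersetCard k

def margin {n : ℕ} (μ : Finset (Fin n) → ℝ) (k : ℕ) (i : Fin n) : ℝ :=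
  ∑ S ∈ kSets n k, if i ∈ S then μ S else 0

def pairProb {n : ℕ} (μ : Finset (Fin n) → ℝ) (k : ℕ) (i j : Fin n) : ℝ :=
  ∑ S ∈ kSets n k, if i ∈ S ∧ j ∈ S then μ S else 0

def condProb {n : ℕ} (μ : Finset (Fin n) → ℝ) (k : ℕ) (i j : Fin n) : ℝ :=
  pairProb μ k i j / margin μ k i

def corrMatrix {n : ℕ} (μ : Finset (Fin n) → ℝ) (k : ℕ) : Matrix (Fin n) (Fin n) ℝ :=
  fun i j => if i = j then 1 - margin μ k i else condProb μ k i j - margin μ k j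

def SpectrallyIndependent {n : ℕ} (μ : Finset (Fin n) → ℝ) (k : ℕ) (C : ℝ) : Prop :=
  ∀ t : ℝ, Module.End.HasEigenvalue (Matrix.toLin' (corrMatrix μ k)) t → t ≤ C

/-- The function `z ↦ log g_μ(z₁^{1/η}, …, z_n^{1/η})`. -/
def logGen {n : ℕ} (μ : Finset (Fin n) → ℝ) (k : ℕ) (η : ℝ) : (Fin n → ℝ) → ℝ :=
  fun z => Real.log (∑ S ∈ kSets n k, μ S * ∏ i ∈ S, z i ^ (1 / η))

/-- Second partial derivative (Hessian entry) of `F : (Fin n → ℝ) → ℝ` at `x`. -/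
def hessEntry {n : ℕ} (F : (Fin n → ℝ) → ℝ) (x : Fin n → ℝ) (i j : Fin n) : ℝ :=
  fderiv ℝ (fun y => fderiv ℝ F y (Pi.single j 1)) x (Pi.single i 1)

/-! ### Auxiliary material -/

def polyFun {n : ℕ} (w : Finset (Fin n) → ℝ) (A : Finset (Finset (Fin n))) (e : Fin n → ℝ) :
    (Fin n → ℝ) → ℝ := fun z => ∑ S ∈ A, w S * ∏ i ∈ S, z i ^ e i

def polyDeriv {n : ℕ} (w : Finset (Fin n) → ℝ) (A : Finset (Finset (Fin n))) (e : Fin n → ℝ)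
    (y : Fin n → ℝ) : (Fin n → ℝ) →L[ℝ] ℝ :=
  ∑ S ∈ A, w S • ∑ m ∈ S, (∏ j ∈ S.erase m, y j ^ e j) •
    ((e m * y m ^ (e m - 1)) • ContinuousLinearMap.proj m)

lemma hasFDerivAt_polyFun {n : ℕ} (w : Finset (Fin n) → ℝ) (A : Finset (Finset (Fin n)))
    (e : Fin n → ℝ) (y : Fin n → ℝ) (hy : ∀ i, 0 < y i) :
    HasFDerivAt (polyFun w A e) (polyDeriv w A e y) y := by
  apply HasFDerivAt.fun_sum
  intro S _
  apply HasFDerivAt.const_mul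
  apply HasFDerivAt.finset_prod
  intro i _
  have h1 : HasDerivAt (fun x : ℝ => x ^ e i) (e i * y i ^ (e i - 1)) (y i) :=
    Real.hasDerivAt_rpow_const (Or.inl (hy i).ne')
  have h2 := hasFDerivAt_apply (𝕜 := ℝ) i y
  exact h1.comp_hasFDerivAt y h2

lemma polyDeriv_apply_single {n : ℕ} (w : Finset (Fin n) → ℝ) (A : Finset (Finset (Fin n)))
    (e : Fin n → ℝ) (y : Fin n → ℝ) (j : Fin n) :
    polyDeriv w A e y (Pi.single j 1) =
      ∑ S ∈ A, w S * (if j ∈ S then (∏ i ∈ S.erase j, y i ^ e i) * (e j * y j ^ (e j - 1)) else 0) := by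
  simp only [polyDeriv, ContinuousLinearMap.coe_sum', Finset.sum_apply,
    ContinuousLinearMap.coe_smul', Pi.smul_apply, ContinuousLinearMap.proj_apply,
    Pi.single_apply, smul_eq_mul, mul_ite, mul_one, mul_zero]
  exact Finset.sum_congr rfl fun S _ => by
    rw [Finset.sum_ite_eq' S j (fun m => (∏ j' ∈ S.erase m, y j' ^ e j') * (e m * y m ^ (e m - 1))),
      mul_ite, mul_zero]

lemma polyFun_one {n : ℕ} (w : Finset (Fin n) → ℝ) (A : Finset (Finset (Fin n))) (e : Fin n → ℝ) :
    polyFun w A e (fun _ => 1) = ∑ S ∈ A, w S := by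
  simp [polyFun, Real.one_rpow]

lemma polyDeriv_one_apply_single {n : ℕ} (w : Finset (Fin n) → ℝ) (A : Finset (Finset (Fin n)))
    (e : Fin n → ℝ) (j : Fin n) :
    polyDeriv w A e (fun _ => 1) (Pi.single j 1) =
      ∑ S ∈ A, w S * (if j ∈ S then e j else 0) := by
  rw [polyDeriv_apply_single]
  simp [Real.one_rpow]

lemma polyFun_pos {n : ℕ} {w : Finset (Fin n) → ℝ} {A : Finset (Finset (Fin n))} {e : Fin n → ℝ}
    {y : Fin n → ℝ} (hw : ∀ S, 0 ≤ w S) (hsum : ∑ S ∈ A, w S = 1) (hy : ∀ i, 0 < y i) :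
    0 < polyFun w A e y := by
  have hex : ∃ S ∈ A, (0:ℝ) < w S := by
    by_contra h
    push_neg at h
    have : ∑ S ∈ A, w S ≤ 0 := Finset.sum_nonpos fun S hS => h S hS
    linarith
  obtain ⟨S₀, hS₀, hw₀⟩ := hex
  refine Finset.sum_pos' (fun S _ => mul_nonneg (hw S) (Finset.prod_nonneg fun i _ =>
    (Real.rpow_pos_of_pos (hy i) _).le)) ⟨S₀, hS₀, ?_⟩
  exact mul_pos hw₀ (Finset.prod_pos fun i _ => Real.rpow_pos_of_pos (hy i) _)

lemma sum_ite_const_margin {n k : ℕ} (μ : Finset (Fin n) → ℝ) (i : Fin n) (c : ℝ) :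
    ∑ S ∈ kSets n k, μ S * (if i ∈ S then c else 0) = c * margin μ k i := by
  rw [margin, Finset.mul_sum]
  exact Finset.sum_congr rfl fun S _ => by split_ifs <;> ring

lemma hess_eq {n k : ℕ} (μ : Finset (Fin n) → ℝ) (η : ℝ)
    (hnonneg : ∀ S, 0 ≤ μ S) (hsum : ∑ S ∈ kSets n k, μ S = 1) (i j : Fin n) :
    hessEntry (logGen μ k η) (fun _ => 1) i j =
      (if i = j then (1/η)*((1/η)-1)*margin μ k j else (1/η)^2 * pairProb μ k i j)
        - (1/η)^2 * margin μ k i * margin μ k j := by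
  classical
  set α := 1/η with hα
  set A := kSets n k with hA
  set e : Fin n → ℝ := fun _ => α with he
  set ej : Fin n → ℝ := fun m => if m = j then α - 1 else α with hej
  set wj : Finset (Fin n) → ℝ := fun S => α * μ S with hwj
  set Aj : Finset (Finset (Fin n)) := A.filter (fun S => j ∈ S) with hAj
  set g : (Fin n → ℝ) → ℝ := polyFun μ A e with hg
  set Nj : (Fin n → ℝ) → ℝ := polyFun wj Aj ej with hN
  set U : Set (Fin n → ℝ) := {y | ∀ m, 0 < y m} with hU
  have hUopen : IsOpen U := by
    have : U = Set.pi Set.univ (fun _ : Fin n => Set.Ioi (0:ℝ)) := by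
      ext y; simp [Set.mem_pi, hU]
    exact this ▸ isOpen_set_pi Set.finite_univ (fun m _ => isOpen_Ioi)
  have h1U : (fun _ : Fin n => (1:ℝ)) ∈ U := fun m => one_pos
  have hkey : ∀ y ∈ U, fderiv ℝ (logGen μ k η) y (Pi.single j 1) = Nj y * (g y)⁻¹ := by
    intro y hy
    have hyp : ∀ m, 0 < y m := hy
    have hgd : HasFDerivAt g (polyDeriv μ A e y) y := hasFDerivAt_polyFun μ A e y hyp
    have hgpos : 0 < g y := polyFun_pos hnonneg hsum hyp
    have hlog : HasFDerivAt (fun z => Real.log (g z)) ((g y)⁻¹ • polyDeriv μ A e y) y :=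
      hgd.log hgpos.ne'
    have hfd : fderiv ℝ (logGen μ k η) y = (g y)⁻¹ • polyDeriv μ A e y := hlog.fderiv
    rw [hfd]
    rw [ContinuousLinearMap.smul_apply, smul_eq_mul, polyDeriv_apply_single]
    rw [mul_comm]
    congr 1
    rw [hN, polyFun, hAj, Finset.sum_filter]
    refine Finset.sum_congr rfl fun S _ => ?_
    by_cases hjS : j ∈ S
    · simp only [hjS, if_true]
      have hprod : ∏ m ∈ S, y m ^ ej m = y j ^ (α - 1) * ∏ m ∈ S.erase j, y m ^ e m := by
        rw [← Finset.mul_prod_erase S _ hjS]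
        have : ej j = α - 1 := by simp [hej]
        rw [this]
        congr 1
        exact Finset.prod_congr rfl fun m hm => by
          simp [hej, he, (Finset.mem_erase.mp hm).1]
      rw [hprod, hwj]
      simp only [he]
      ring
    · simp [hjS]
  have hEq : (fun y => fderiv ℝ (logGen μ k η) y (Pi.single j 1))
      =ᶠ[nhds (fun _ : Fin n => (1:ℝ))] (fun y => Nj y * (g y)⁻¹) :=
    Filter.eventuallyEq_of_mem (hUopen.mem_nhds h1U) hkey
  rw [hessEntry, Filter.EventuallyEq.fderiv_eq hEq]
  have h1p : ∀ m : Fin n, 0 < (fun _ : Fin n => (1:ℝ)) m := fun m => one_pos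
  have hgd : HasFDerivAt g (polyDeriv μ A e (fun _ => 1)) (fun _ => 1) :=
    hasFDerivAt_polyFun μ A e _ h1p
  have hNd : HasFDerivAt Nj (polyDeriv wj Aj ej (fun _ => 1)) (fun _ => 1) :=
    hasFDerivAt_polyFun wj Aj ej _ h1p
  have hg1 : g (fun _ => 1) = 1 := by rw [hg, polyFun_one, ← hsum]
  have hinv : HasFDerivAt (fun y => (g y)⁻¹)
      ((-(g (fun _ : Fin n => (1:ℝ)) ^ 2)⁻¹) • polyDeriv μ A e (fun _ => 1)) (fun _ => 1) :=
    (hasDerivAt_inv (by rw [hg1]; norm_num)).comp_hasFDerivAt _ hgd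
  have hmul := hNd.fun_mul hinv
  rw [hmul.fderiv]
  rw [ContinuousLinearMap.add_apply, ContinuousLinearMap.smul_apply,
    ContinuousLinearMap.smul_apply, ContinuousLinearMap.smul_apply]
  rw [polyDeriv_one_apply_single, polyDeriv_one_apply_single]
  have hNj1 : Nj (fun _ => 1) = α * margin μ k j := by
    rw [hN, polyFun_one, hAj, Finset.sum_filter, hwj, margin, Finset.mul_sum]
    exact Finset.sum_congr rfl fun S _ => by split_ifs <;> ring
  have hDg : ∑ S ∈ A, μ S * (if i ∈ S then e i else 0) = α * margin μ k i := by
    rw [hA, sum_ite_const_margin μ i (e i)]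
  have hDN : ∑ S ∈ Aj, wj S * (if i ∈ S then ej i else 0) =
      if i = j then α * (α - 1) * margin μ k j else α^2 * pairProb μ k i j := by
    rw [hAj, Finset.sum_filter]
    by_cases hij : i = j
    · subst hij
      simp only [if_true]
      rw [margin, Finset.mul_sum]
      refine Finset.sum_congr rfl fun S _ => ?_
      by_cases hiS : i ∈ S <;> simp [hiS, hwj, hej] <;> ring
    · simp only [hij, if_false]
      rw [pairProb, Finset.mul_sum]
      refine Finset.sum_congr rfl fun S _ => ?_
      by_cases hiS : i ∈ S <;> by_cases hjS : j ∈ S <;>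
        simp [hiS, hjS, hwj, hej, hij] <;> ring
  rw [hDN, hNj1, hDg, hg1, smul_eq_mul, smul_eq_mul, smul_eq_mul]
  by_cases hij : i = j
  · subst hij; simp only [if_true]; ring
  · simp only [hij, if_false]; ring

lemma pairProb_symm {n k : ℕ} (μ : Finset (Fin n) → ℝ) (i j : Fin n) :
    pairProb μ k i j = pairProb μ k j i := by
  unfold pairProb
  exact Finset.sum_congr rfl fun S _ => by
    exact if_congr and_comm rfl rfl

lemma pairProb_self {n k : ℕ} (μ : Finset (Fin n) → ℝ) (i : Fin n) :
    pairProb μ k i i = margin μ k i := by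
  unfold pairProb margin
  exact Finset.sum_congr rfl fun S _ => by
    exact if_congr and_self_iff rfl rfl

lemma posSemidef_smul {n : ℕ} {c : ℝ} (hc : 0 ≤ c) {A : Matrix (Fin n) (Fin n) ℝ}
    (h : A.PosSemidef) : (c • A).PosSemidef := by
  refine Matrix.PosSemidef.of_dotProduct_mulVec_nonneg ?_ fun x => ?_
  · show (c • A)ᴴ = c • A
    rw [Matrix.conjTranspose_smul, star_trivial, h.1.eq]
  · rw [Matrix.smul_mulVec, dotProduct_smul, smul_eq_mul]
    exact mul_nonneg hc (h.dotProduct_mulVec_nonneg x)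

lemma posSemidef_smul_iff {n : ℕ} {c : ℝ} (hc : 0 < c) {A : Matrix (Fin n) (Fin n) ℝ} :
    (c • A).PosSemidef ↔ A.PosSemidef := by
  constructor
  · intro h
    have := posSemidef_smul (inv_nonneg.mpr hc.le) h
    rwa [smul_smul, inv_mul_cancel₀ hc.ne', one_smul] at this
  · exact posSemidef_smul hc.le

lemma spectral_iff {n k : ℕ} (μ : Finset (Fin n) → ℝ) (η : ℝ) (hη : 0 < η)
    (hmarg : ∀ i, 0 < margin μ k i) :
    SpectrallyIndependent μ k η ↔
      (-((1 / η) ^ 2 • (Matrix.diagonal (margin μ k) * corrMatrix μ k)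
        - (1 / η) • Matrix.diagonal (margin μ k))).PosSemidef := by
  classical
  set P := margin μ k with hP
  set D : Matrix (Fin n) (Fin n) ℝ := Matrix.diagonal P with hD
  set Ψ : Matrix (Fin n) (Fin n) ℝ := corrMatrix μ k with hΨ
  set C : Matrix (Fin n) (Fin n) ℝ := D * Ψ with hC
  set A : Matrix (Fin n) (Fin n) ℝ := η • D - C with hAdef
  have hCsym : ∀ i j, C i j = pairProb μ k i j - P i * P j := by
    intro i j
    rw [hC, Matrix.diagonal_mul]
    by_cases hij : i = j
    · subst hij
      rw [hΨ]
      show P i * (if i = i then 1 - margin μ k i else _) = _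
      rw [if_pos rfl, pairProb_self]
      ring
    · rw [hΨ]
      show P i * (if i = j then _ else condProb μ k i j - margin μ k j) = _
      rw [if_neg hij]
      unfold condProb
      field_simp [(hmarg i).ne']
      have hm : margin μ k i ≠ 0 := (hmarg i).ne'
      have e : P i * (pairProb μ k i j / margin μ k i) = pairProb μ k i j := by
        rw [hP]; field_simp
      rw [mul_sub, e, hP]
  have hAherm : A.IsHermitian := by
    show Aᴴ = A
    ext i j
    rw [Matrix.conjTranspose_apply, star_trivial]
    rw [hAdef]
    simp only [Matrix.sub_apply, Matrix.smul_apply, smul_eq_mul]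
    rw [hCsym i j, hCsym j i, pairProb_symm μ j i]
    rw [hD]
    by_cases hij : i = j
    · subst hij; ring
    · rw [Matrix.diagonal_apply_ne _ hij, Matrix.diagonal_apply_ne _ (Ne.symm hij)]
      ring
  have hMA : -((1 / η) ^ 2 • (D * Ψ) - (1 / η) • D) = ((1/η)^2 : ℝ) • A := by
    rw [hAdef, ← hC]
    ext i j
    simp only [Matrix.neg_apply, Matrix.sub_apply, Matrix.smul_apply, smul_eq_mul]
    field_simp
    try ring
  rw [hMA, posSemidef_smul_iff (by positivity : (0:ℝ) < (1/η)^2)]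
  constructor
  · -- spectral independence → PosSemidef
    intro hspec
    set s : Fin n → ℝ := fun i => Real.sqrt (P i) with hs
    have hspos : ∀ i, 0 < s i := fun i => Real.sqrt_pos.mpr (hmarg i)
    have hss : ∀ i, s i * s i = P i := fun i => Real.mul_self_sqrt (hmarg i).le
    set E : Matrix (Fin n) (Fin n) ℝ := Matrix.diagonal (fun i => (s i)⁻¹) with hE
    set B : Matrix (Fin n) (Fin n) ℝ := Matrix.diagonal s with hB
    have htriple : ∀ (d₁ d₂ d₃ : Fin n → ℝ), Matrix.diagonal d₁ * Matrix.diagonal d₂ *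
        Matrix.diagonal d₃ = Matrix.diagonal (fun i => d₁ i * d₂ i * d₃ i) := by
      intro d₁ d₂ d₃
      rw [Matrix.diagonal_mul_diagonal, Matrix.diagonal_mul_diagonal]
    have hBE : B * E = 1 := by
      rw [hB, hE, Matrix.diagonal_mul_diagonal]
      have h2 : (fun i => s i * (s i)⁻¹) = fun _ => (1:ℝ) :=
        funext fun i => mul_inv_cancel₀ (hspos i).ne'
      rw [h2, Matrix.diagonal_one]
    have hEB : E * B = 1 := by
      rw [hB, hE, Matrix.diagonal_mul_diagonal]
      have h2 : (fun i => (s i)⁻¹ * s i) = fun _ => (1:ℝ) :=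
        funext fun i => inv_mul_cancel₀ (hspos i).ne'
      rw [h2, Matrix.diagonal_one]
    have hEDE : E * D * E = 1 := by
      rw [hE, hD, htriple]
      have h2 : (fun i => (s i)⁻¹ * P i * (s i)⁻¹) = fun _ => (1:ℝ) := funext fun i => by
        rw [← hss i]; field_simp [(hspos i).ne']
      rw [h2, Matrix.diagonal_one]
    have hEED : E * E * D = 1 := by
      rw [hE, hD, htriple]
      have h2 : (fun i => (s i)⁻¹ * (s i)⁻¹ * P i) = fun _ => (1:ℝ) := funext fun i => by
        rw [← hss i]; field_simp [(hspos i).ne']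
      rw [h2, Matrix.diagonal_one]
    have hEh : Eᴴ = E := by
      rw [hE, Matrix.diagonal_conjTranspose]
      congr 1
    have hBh : Bᴴ = B := by
      rw [hB, Matrix.diagonal_conjTranspose]
      congr 1
    set SS : Matrix (Fin n) (Fin n) ℝ := E * A * E with hSS
    have hSherm : SS.IsHermitian := by
      show SSᴴ = SS
      rw [hSS, Matrix.conjTranspose_mul, Matrix.conjTranspose_mul, hEh, hAherm.eq,
        Matrix.mul_assoc]
    have hEigNonneg : ∀ i0, 0 ≤ hSherm.eigenvalues i0 := by
      intro i0
      set t := hSherm.eigenvalues i0 with ht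
      set w : Fin n → ℝ := ⇑(hSherm.eigenvectorBasis i0) with hw
      have hweq : SS *ᵥ w = t • w := hSherm.mulVec_eigenvectorBasis i0
      have hw0 : w ≠ 0 := (WithLp.ofLp_eq_zero 2).not.mpr (hSherm.eigenvectorBasis.orthonormal.ne_zero i0)
      set u : Fin n → ℝ := E *ᵥ w with hu
      have hu0 : u ≠ 0 := by
        intro h
        apply hw0
        have : w = (B * E) *ᵥ w := by rw [hBE, Matrix.one_mulVec]
        rw [← Matrix.mulVec_mulVec, ← hu, h, Matrix.mulVec_zero] at this
        exact this
      have hEDu : E *ᵥ (D *ᵥ u) = w := by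
        rw [hu, Matrix.mulVec_mulVec, Matrix.mulVec_mulVec, hEDE, Matrix.one_mulVec]
      have hECu : E *ᵥ (C *ᵥ u) = (η - t) • w := by
        have h1 : E *ᵥ (A *ᵥ u) = t • w := by
          rw [hu, Matrix.mulVec_mulVec, Matrix.mulVec_mulVec, ← hSS, hweq]
        rw [hAdef] at h1
        rw [Matrix.sub_mulVec, Matrix.smul_mulVec] at h1
        have h2 : E *ᵥ (η • (D *ᵥ u) - C *ᵥ u) = t • w := h1
        rw [Matrix.mulVec_sub, Matrix.mulVec_smul, hEDu] at h2
        have : E *ᵥ (C *ᵥ u) = η • w - t • w := by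
          rw [← h2]; abel
        rw [this, sub_smul]
      have hΨu : Ψ *ᵥ u = (η - t) • u := by
        have hΨeq : Ψ = (E * E) * C := by
          calc Ψ = 1 * Ψ := (Matrix.one_mul Ψ).symm
          _ = (E * E * D) * Ψ := by rw [hEED]
          _ = (E * E) * (D * Ψ) := by rw [Matrix.mul_assoc]
          _ = (E * E) * C := by rw [← hC]
        rw [hΨeq, ← Matrix.mulVec_mulVec, ← Matrix.mulVec_mulVec, hECu,
          Matrix.mulVec_smul]
      have hEigval : Module.End.HasEigenvalue (Matrix.toLin' Ψ) (η - t) := by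
        apply Module.End.hasEigenvalue_of_hasEigenvector (x := u)
        refine ⟨Module.End.mem_eigenspace_iff.2 ?_, hu0⟩
        rw [Matrix.toLin'_apply]
        exact hΨu
      have := hspec (η - t) hEigval
      linarith
    have hSpsd : SS.PosSemidef := hSherm.posSemidef_iff_eigenvalues_nonneg.mpr hEigNonneg
    have hBSB : B * SS * Bᴴ = A := by
      rw [hBh, hSS]
      calc B * (E * A * E) * B = (B * E) * (A * (E * B)) := by
            simp only [Matrix.mul_assoc]
      _ = A := by rw [hBE, hEB, Matrix.mul_one, Matrix.one_mul]
    have := hSpsd.mul_mul_conjTranspose_same B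
    rwa [hBSB] at this
  · -- PosSemidef → spectral independence
    intro hA t ht
    obtain ⟨v, hv⟩ := ht.exists_hasEigenvector
    have hv1 : Ψ *ᵥ v = t • v := by
      have := Module.End.mem_eigenspace_iff.1 hv.1
      rwa [Matrix.toLin'_apply] at this
    have hv0 : v ≠ 0 := hv.2
    have hquad := hA.dotProduct_mulVec_nonneg v
    have hstar : (star v : Fin n → ℝ) = v := by
      funext i; exact star_trivial _
    rw [hstar] at hquad
    have hAv : A *ᵥ v = (η - t) • (D *ᵥ v) := by
      rw [hAdef, Matrix.sub_mulVec, Matrix.smul_mulVec, hC,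
        ← Matrix.mulVec_mulVec, hv1, Matrix.mulVec_smul, sub_smul]
    have hQpos : 0 < v ⬝ᵥ (D *ᵥ v) := by
      obtain ⟨i0, hi0⟩ := Function.ne_iff.mp hv0
      unfold dotProduct
      refine Finset.sum_pos' (fun i _ => ?_) ⟨i0, Finset.mem_univ i0, ?_⟩
      · rw [hD, Matrix.mulVec_diagonal]
        have : v i * (P i * v i) = P i * (v i * v i) := by ring
        rw [this]
        exact mul_nonneg (hmarg i).le (mul_self_nonneg _)
      · rw [hD, Matrix.mulVec_diagonal]
        have : v i0 * (P i0 * v i0) = P i0 * (v i0 * v i0) := by ring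
        rw [this]
        exact mul_pos (hmarg i0) (mul_self_pos.mpr hi0)
    rw [hAv, dotProduct_smul, smul_eq_mul] at hquad
    by_contra hcon
    push_neg at hcon
    have : (η - t) * v ⬝ᵥ (D *ᵥ v) < 0 :=
      mul_neg_of_neg_of_pos (by linarith) hQpos
    linarith

/-- `μ` on `binom([n],k)` is `η`-spectrally independent iff the Hessian of
`z ↦ log g_μ(z^{1/η})` at `z = 1` is negative semidefinite; moreover this Hessian equals
`(1/η)² D Ψ_μ − (1/η) D` where `D = diag(P_μ[i])`. -/
theorem spectral_independence_iff_hessian_neg_semidef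
    (n k : ℕ) (μ : Finset (Fin n) → ℝ) (η : ℝ)
    (hk : 1 ≤ k) (hη : 0 < η)
    (hnonneg : ∀ S, 0 ≤ μ S)
    (hsum : ∑ S ∈ kSets n k, μ S = 1)
    (hmarg : ∀ i, 0 < margin μ k i) :
    (∀ i j, hessEntry (logGen μ k η) (fun _ => 1) i j =
        ((1 / η) ^ 2 • (Matrix.diagonal (margin μ k) * corrMatrix μ k)
          - (1 / η) • Matrix.diagonal (margin μ k)) i j)
    ∧ (SpectrallyIndependent μ k η ↔
        (-((1 / η) ^ 2 • (Matrix.diagonal (margin μ k) * corrMatrix μ k)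
          - (1 / η) • Matrix.diagonal (margin μ k))).PosSemidef) := by
  constructor
  · intro i j
    rw [hess_eq μ η hnonneg hsum i j]
    simp only [Matrix.sub_apply, Matrix.smul_apply, smul_eq_mul, Matrix.diagonal_mul]
    by_cases hij : i = j
    · subst hij
      rw [show corrMatrix μ k i i = 1 - margin μ k i from if_pos rfl,
        Matrix.diagonal_apply_eq]
      simp only [if_true]
      ring
    · rw [show corrMatrix μ k i j = condProb μ k i j - margin μ k j from if_neg hij,
        Matrix.diagonal_apply_ne _ hij]
      simp only [hij, if_false]
      unfold condProb
      field_simp [(hmarg i).ne']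
      try ring
  · exact spectral_iff μ η hη hmarg

end
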